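/- Let n ≥ 6, let σ be a 3-form on ℝⁿ, and let F : ℝⁿ → ℝⁿ be a continuous map such that F(tX) = tF(X) for all t ∈ ℝ and X ∈ ℝⁿ, ⟨F(X), X⟩ = 0 and ‖F(X)‖ = ‖X‖ for all X, and σ_X² = −‖X‖² id + X⊗X + F(X)⊗F(X) for all X ∈ ℝⁿ. Then F is linear; moreover F is an orthogonal, skew-symmetric endomorphism of ℝⁿ with F² = −id (i.e. a Hermitian structure on ℝⁿ). -/

import Mathlib

open scoped RealInnerProductSpace

noncomputable section

/-- Euclidean space `ℝⁿ`. -/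
abbrev Euc (n : ℕ) : Type := EuclideanSpace ℝ (Fin n)

/-- The skew-symmetric endomorphism `τ_X` of `ℝⁿ` associated to a 3-form `τ` and a vector `X`,
characterized by `⟪τ_X Y, Z⟫ = τ (X, Y, Z)`. -/
noncomputable def contr3 {n : ℕ} (τ : AlternatingMap ℝ (Euc n) ℝ (Fin 3)) (X : Euc n) :
    Euc n →ₗ[ℝ] Euc n where
  toFun Y := ∑ i : Fin n,
    ((τ.curryLeft X).curryLeft Y ![EuclideanSpace.single i 1]) • EuclideanSpace.single i (1 : ℝ)
  map_add' Y₁ Y₂ := by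
    simp [map_add, add_smul, Finset.sum_add_distrib]
  map_smul' c Y := by
    simp [map_smul, smul_smul, Finset.smul_sum]

/-- `τ` is a vector cross product: `‖τ_X Y‖² = ‖X‖²‖Y‖² − ⟪X,Y⟫²`. -/
def IsVCP {n : ℕ} (τ : AlternatingMap ℝ (Euc n) ℝ (Fin 3)) : Prop :=
  ∀ X Y : Euc n, ‖contr3 τ X Y‖ ^ 2 = ‖X‖ ^ 2 * ‖Y‖ ^ 2 - ⟪X, Y⟫ ^ 2

/-- `σ` is a generalized vector cross product: there is a nonzero skew-symmetric endomorphism `A`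
such that for every unit vector `X`, `σ_X` is orthogonally conjugate to `A`. -/
def IsGVCP {n : ℕ} (σ : AlternatingMap ℝ (Euc n) ℝ (Fin 3)) : Prop :=
  ∃ A : Euc n →ₗ[ℝ] Euc n, A ≠ 0 ∧ (∀ X Y : Euc n, ⟪A X, Y⟫ = -⟪X, A Y⟫) ∧
    ∀ X : Euc n, ‖X‖ = 1 → ∃ u : Euc n ≃ₗᵢ[ℝ] Euc n,
      ∀ Y : Euc n, contr3 σ X Y = u (A (u.symm Y))

/-- The endomorphism `U ⊗ V : X ↦ ⟪X, V⟫ U`. -/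
noncomputable def tens {n : ℕ} (U V : Euc n) : Euc n →ₗ[ℝ] Euc n where
  toFun X := ⟪X, V⟫ • U
  map_add' X₁ X₂ := by simp only [inner_add_left, add_smul]
  map_smul' c X := by simp only [RingHom.id_apply]; rw [real_inner_smul_left, mul_smul]

/-- The `i`-th coordinate, as a linear functional on `ℝⁿ`. -/
noncomputable def coordL {n : ℕ} (i : Fin n) : Euc n →ₗ[ℝ] ℝ where
  toFun x := x i
  map_add' _ _ := rfl
  map_smul' _ _ := rfl

/-- The elementary 3-form `eᵢ ∧ eⱼ ∧ e_k` on `ℝⁿ`. -/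
noncomputable def elem3 {n : ℕ} (i j k : Fin n) : AlternatingMap ℝ (Euc n) ℝ (Fin 3) :=
  (Matrix.detRowAlternating : AlternatingMap ℝ (Fin 3 → ℝ) ℝ (Fin 3)).compLinearMap
    (LinearMap.pi (fun s : Fin 3 => coordL (![i, j, k] s)))

/-- The action of an orthogonal transformation `α` on 3-forms:
`(α · τ)(X,Y,Z) = τ(α⁻¹X, α⁻¹Y, α⁻¹Z)`. -/
noncomputable def oAct {n : ℕ} (α : Euc n ≃ₗᵢ[ℝ] Euc n)
    (τ : AlternatingMap ℝ (Euc n) ℝ (Fin 3)) : AlternatingMap ℝ (Euc n) ℝ (Fin 3) :=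
  τ.compLinearMap α.symm.toLinearEquiv.toLinearMap

/-- The volume form `e₁ ∧ e₂ ∧ e₃` (in any `ℝⁿ` with `n ≥ 3`). -/
noncomputable def vol3Gen {n : ℕ} (h : 3 ≤ n) : AlternatingMap ℝ (Euc n) ℝ (Fin 3) :=
  elem3 ⟨0, by omega⟩ ⟨1, by omega⟩ ⟨2, by omega⟩

/-- The fundamental `G₂` 3-form
`τ₀ = e₁∧e₂∧e₇ + e₃∧e₄∧e₇ + e₅∧e₆∧e₇ + e₁∧e₃∧e₅ − e₁∧e₄∧e₆ − e₂∧e₃∧e₆ − e₂∧e₄∧e₅`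
(with 1-indexed basis vectors, stated in any `ℝⁿ` with `n ≥ 7`). -/
noncomputable def tau0Gen {n : ℕ} (h : 7 ≤ n) : AlternatingMap ℝ (Euc n) ℝ (Fin 3) :=
  elem3 ⟨0, by omega⟩ ⟨1, by omega⟩ ⟨6, by omega⟩
  + elem3 ⟨2, by omega⟩ ⟨3, by omega⟩ ⟨6, by omega⟩
  + elem3 ⟨4, by omega⟩ ⟨5, by omega⟩ ⟨6, by omega⟩
  + elem3 ⟨0, by omega⟩ ⟨2, by omega⟩ ⟨4, by omega⟩
  - elem3 ⟨0, by omega⟩ ⟨3, by omega⟩ ⟨5, by omega⟩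
  - elem3 ⟨1, by omega⟩ ⟨2, by omega⟩ ⟨5, by omega⟩
  - elem3 ⟨1, by omega⟩ ⟨3, by omega⟩ ⟨4, by omega⟩

/-- The `SU(3)` 3-form `σ₀ = e₁∧e₃∧e₅ − e₁∧e₄∧e₆ − e₂∧e₃∧e₆ − e₂∧e₄∧e₅`
(with 1-indexed basis vectors, stated in any `ℝⁿ` with `n ≥ 6`). -/
noncomputable def sigma0Gen {n : ℕ} (h : 6 ≤ n) : AlternatingMap ℝ (Euc n) ℝ (Fin 3) :=
  elem3 ⟨0, by omega⟩ ⟨2, by omega⟩ ⟨4, by omega⟩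
  - elem3 ⟨0, by omega⟩ ⟨3, by omega⟩ ⟨5, by omega⟩
  - elem3 ⟨1, by omega⟩ ⟨2, by omega⟩ ⟨5, by omega⟩
  - elem3 ⟨1, by omega⟩ ⟨3, by omega⟩ ⟨4, by omega⟩

end

section AuxStatement12

variable {E : Type*} [NormedAddCommGroup E] [InnerProductSpace ℝ E]

/-- If `B Z Z = 0` for a PSD symmetric bilinear function `B`, then `B Z W = 0`. -/
private lemma st12_cs_degenerate (B : E → E → ℝ)
    (hsymm : ∀ X Y, B X Y = B Y X)
    (haddl : ∀ X X' Y, B (X + X') Y = B X Y + B X' Y)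
    (hsmull : ∀ (t : ℝ) (X Y : E), B (t • X) Y = t * B X Y)
    (hpos : ∀ X, 0 ≤ B X X)
    {Z W : E} (hZ : B Z Z = 0) : B Z W = 0 := by
  have haddr : ∀ X Y Y', B X (Y + Y') = B X Y + B X Y' := fun X Y Y' => by
    rw [hsymm, haddl, hsymm Y X, hsymm Y' X]
  have hsmulr : ∀ (t : ℝ) (X Y : E), B X (t • Y) = t * B X Y := fun t X Y => by
    rw [hsymm, hsmull, hsymm]
  have key : ∀ t : ℝ, 0 ≤ 2 * t * B Z W + t ^ 2 * B W W := by
    intro t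
    have := hpos (Z + t • W)
    rw [haddl, haddr, haddr, hsmull, hsmulr, hsmulr, hsmull, hZ, hsymm W Z] at this
    nlinarith [this]
  by_contra hne
  set a := B W W with ha
  set b := B Z W with hb
  have h1 : (0:ℝ) < a + 1 := by have := hpos W; rw [← ha] at this; linarith
  set s : ℝ := 1 / (a + 1) with hs'
  have hs : (0:ℝ) < s := by positivity
  have hsa : s * a < 1 := by
    rw [hs', div_mul_eq_mul_div, one_mul, div_lt_one h1]; linarith
  have hb2 : (0:ℝ) < b ^ 2 := by positivity
  have := key (-b * s)
  nlinarith [this, mul_pos hs hb2, mul_pos (mul_pos hs hs) hb2, hsa]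

/-- Core case of the sign analysis: if `k X, k Y > 0` then `B X Y = k X * k Y`,
via the intermediate value theorem along the segment from `X` to `-Y`. -/
private lemma st12_core_case (k : E → ℝ) (B : E → E → ℝ)
    (hcont : Continuous k)
    (hsymm : ∀ X Y, B X Y = B Y X)
    (haddl : ∀ X X' Y, B (X + X') Y = B X Y + B X' Y)
    (hsmull : ∀ (t : ℝ) (X Y : E), B (t • X) Y = t * B X Y)
    (hkB : ∀ X, k X ^ 2 = B X X)
    (hodd : ∀ X, k (-X) = - k X)
    {X Y : E} (hX : 0 < k X) (hY : 0 < k Y) : B X Y = k X * k Y := by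
  have hpos : ∀ Z, 0 ≤ B Z Z := fun Z => (hkB Z) ▸ sq_nonneg (k Z)
  set c : ℝ → E := fun t => (1 - t) • X - t • Y with hc
  have hccont : Continuous (fun t => k (c t)) := by
    apply hcont.comp
    exact ((continuous_const.sub continuous_id).smul continuous_const).sub
      (continuous_id.smul continuous_const)
  have hc0 : k (c 0) = k X := by simp [hc]
  have hc1 : k (c 1) = - k Y := by
    have : c 1 = - Y := by simp [hc]
    rw [this, hodd]
  obtain ⟨t₀, ht₀mem, ht₀⟩ : ∃ t₀ ∈ Set.Icc (0:ℝ) 1, k (c t₀) = 0 := by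
    have h := intermediate_value_Icc' (by norm_num : (0:ℝ) ≤ 1) hccont.continuousOn
    have h0 : (0:ℝ) ∈ Set.Icc (k (c 1)) (k (c 0)) := by
      rw [hc0, hc1]; constructor <;> linarith
    obtain ⟨t₀, ht₀mem, ht₀⟩ := h h0
    exact ⟨t₀, ht₀mem, ht₀⟩
  have ht0pos : 0 < t₀ := by
    rcases eq_or_lt_of_le ht₀mem.1 with h | h
    · exfalso; rw [← h, hc0] at ht₀; linarith
    · exact h
  have ht1 : t₀ < 1 := by
    rcases eq_or_lt_of_le ht₀mem.2 with h | h
    · exfalso; rw [h, hc1] at ht₀; linarith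
    · exact h
  have hZZ : B (c t₀) (c t₀) = 0 := by rw [← hkB, ht₀]; ring
  have hexp : ∀ W, B (c t₀) W = (1 - t₀) * B X W + (- t₀) * B Y W := by
    intro W
    have hct : c t₀ = (1 - t₀) • X + (- t₀) • Y := by
      rw [hc]; simp [sub_eq_add_neg, neg_smul]
    rw [hct, haddl, hsmull, hsmull]
  have e1 : (1 - t₀) * B X X + (- t₀) * B Y X = 0 := by
    rw [← hexp]; exact st12_cs_degenerate B hsymm haddl hsmull hpos hZZ
  have e2 : (1 - t₀) * B X Y + (- t₀) * B Y Y = 0 := by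
    rw [← hexp]; exact st12_cs_degenerate B hsymm haddl hsmull hpos hZZ
  rw [hsymm Y X] at e1
  rw [← hkB] at e1
  rw [← hkB] at e2
  have hbpos : 0 < B X Y := by
    have hkx2 : 0 < k X ^ 2 := by positivity
    nlinarith [e1, ht0pos, ht1]
  nlinarith [e1, e2, hbpos, mul_pos hX hY, mul_pos ht0pos (by linarith : (0:ℝ) < 1 - t₀)]

/-- If `k` is continuous, odd and `k² = B` with `B` symmetric bilinear,
then `B X Y = k X * k Y` for all `X, Y`. -/
private lemma st12_key_prod (k : E → ℝ) (B : E → E → ℝ)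
    (hcont : Continuous k)
    (hsymm : ∀ X Y, B X Y = B Y X)
    (haddl : ∀ X X' Y, B (X + X') Y = B X Y + B X' Y)
    (hsmull : ∀ (t : ℝ) (X Y : E), B (t • X) Y = t * B X Y)
    (hkB : ∀ X, k X ^ 2 = B X X)
    (hodd : ∀ X, k (-X) = - k X)
    (X Y : E) : B X Y = k X * k Y := by
  have hpos : ∀ Z, 0 ≤ B Z Z := fun Z => (hkB Z) ▸ sq_nonneg (k Z)
  have hzero : ∀ {Z W : E}, k Z = 0 → B Z W = 0 := by
    intro Z W hZ
    exact st12_cs_degenerate B hsymm haddl hsmull hpos (by rw [← hkB, hZ]; ring)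
  have hnegr : ∀ Z W : E, B Z (-W) = - B Z W := by
    intro Z W
    rw [hsymm, ← neg_one_smul ℝ W, hsmull, hsymm]; ring
  have hcont' : Continuous (fun Z => - k Z) := hcont.neg
  have hkB' : ∀ Z, (- k Z) ^ 2 = B Z Z := fun Z => by rw [neg_pow]; simpa using hkB Z
  have hodd' : ∀ Z, - k (-Z) = - - k Z := fun Z => by rw [hodd]
  rcases lt_trichotomy (k X) 0 with hX | hX | hX
  · rcases lt_trichotomy (k Y) 0 with hY | hY | hY
    · have := st12_core_case (fun Z => - k Z) B hcont' hsymm haddl hsmull hkB' hodd'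
        (by simpa using hX.le.lt_of_ne (by simpa using (ne_of_lt hX))) (by simpa using hY)
      simpa using this.trans (by ring)
    · rw [hsymm, hzero hY, hY]; ring
    · have hY' : 0 < - k (-Y) := by rw [hodd]; simpa using hY
      have := st12_core_case (fun Z => - k Z) B hcont' hsymm haddl hsmull hkB' hodd'
        (by simpa using hX) hY'
      simp only [hnegr, hodd] at this
      nlinarith [this]
  · rw [hzero hX, hX]; ring
  · rcases lt_trichotomy (k Y) 0 with hY | hY | hY
    · have hY' : 0 < k (-Y) := by rw [hodd]; linarith
      have := st12_core_case k B hcont hsymm haddl hsmull hkB hodd hX hY'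
      simp only [hnegr, hodd] at this
      nlinarith [this]
    · rw [hsymm, hzero hY, hY]; ring
    · exact st12_core_case k B hcont hsymm haddl hsmull hkB hodd hX hY

/-- A continuous odd function whose square is a quadratic form is additive. -/
private lemma st12_key_add (k : E → ℝ) (B : E → E → ℝ)
    (hcont : Continuous k)
    (hsymm : ∀ X Y, B X Y = B Y X)
    (haddl : ∀ X X' Y, B (X + X') Y = B X Y + B X' Y)
    (hsmull : ∀ (t : ℝ) (X Y : E), B (t • X) Y = t * B X Y)
    (hkB : ∀ X, k X ^ 2 = B X X)
    (hodd : ∀ X, k (-X) = - k X)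
    (X Y : E) : k (X + Y) = k X + k Y := by
  have hp := st12_key_prod k B hcont hsymm haddl hsmull hkB hodd
  have e1 : k (X + Y) * k X = (k X + k Y) * k X := by
    rw [← hp (X + Y) X, haddl, hp X X, hp Y X]; ring
  have e2 : k (X + Y) * k Y = (k X + k Y) * k Y := by
    rw [← hp (X + Y) Y, haddl, hp X Y, hp Y Y]; ring
  rcases eq_or_ne (k X) 0 with hX | hX
  · rcases eq_or_ne (k Y) 0 with hY | hY
    · have : k (X + Y) ^ 2 = 0 := by
        rw [hkB, haddl, hp X (X + Y), hp Y (X + Y), hX, hY]; ring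
      rw [hX, hY, pow_eq_zero_iff (by norm_num) |>.mp this]; ring
    · exact mul_right_cancel₀ hY e2
  · exact mul_right_cancel₀ hX e1

end AuxStatement12

private lemma st12_contr3_add {n : ℕ} (τ : AlternatingMap ℝ (Euc n) ℝ (Fin 3)) (X X' Y : Euc n) :
    contr3 τ (X + X') Y = contr3 τ X Y + contr3 τ X' Y := by
  simp [contr3, map_add, add_smul, Finset.sum_add_distrib]

private lemma st12_contr3_smul {n : ℕ} (τ : AlternatingMap ℝ (Euc n) ℝ (Fin 3)) (t : ℝ)
    (X Y : Euc n) : contr3 τ (t • X) Y = t • contr3 τ X Y := by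
  simp [contr3, map_smul, smul_smul, Finset.smul_sum]

/-- The symmetric bilinear form `⟪Q(X,X')U, U⟫` polarizing `X ↦ ⟪F X, U⟫²`. -/
private noncomputable def st12_Bform {n : ℕ} (σ : AlternatingMap ℝ (Euc n) ℝ (Fin 3))
    (U : Euc n) : Euc n → Euc n → ℝ := fun X X' =>
  (⟪contr3 σ X (contr3 σ X' U), U⟫ + ⟪contr3 σ X' (contr3 σ X U), U⟫) / 2
    + ⟪X, X'⟫ * ‖U‖ ^ 2 - ⟪U, X⟫ * ⟪U, X'⟫

section BformLemmas
variable {n : ℕ} (σ : AlternatingMap ℝ (Euc n) ℝ (Fin 3)) (U : Euc n)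

private lemma st12_Bform_symm : ∀ X X' : Euc n, st12_Bform σ U X X' = st12_Bform σ U X' X := by
  intro X X'
  simp only [st12_Bform]
  rw [real_inner_comm X X']
  ring

private lemma st12_Bform_addl : ∀ X X' Y : Euc n,
    st12_Bform σ U (X + X') Y = st12_Bform σ U X Y + st12_Bform σ U X' Y := by
  intro X X' Y
  simp only [st12_Bform, st12_contr3_add, map_add, inner_add_left, inner_add_right]
  ring

private lemma st12_Bform_smull : ∀ (t : ℝ) (X Y : Euc n),
    st12_Bform σ U (t • X) Y = t * st12_Bform σ U X Y := by
  intro t X Y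
  simp only [st12_Bform, st12_contr3_smul, map_smul, real_inner_smul_left,
    real_inner_smul_right, smul_eq_mul, LinearMap.smul_apply]
  ring
end BformLemmas

private lemma st12_Bform_diag {n : ℕ} (σ : AlternatingMap ℝ (Euc n) ℝ (Fin 3))
    (F : Euc n → Euc n)
    (hsq : ∀ X : Euc n, contr3 σ X ∘ₗ contr3 σ X =
      (-(‖X‖ ^ 2)) • LinearMap.id + tens X X + tens (F X) (F X))
    (U X : Euc n) : st12_Bform σ U X X = ⟪F X, U⟫ ^ 2 := by
  have h0 := LinearMap.congr_fun (hsq X) U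
  simp only [LinearMap.comp_apply, LinearMap.add_apply, LinearMap.smul_apply,
    LinearMap.id_apply] at h0
  have h : (⟪contr3 σ X (contr3 σ X U), U⟫ : ℝ)
      = -(‖X‖ ^ 2) * ⟪U, U⟫ + ⟪U, X⟫ * ⟪X, U⟫ + ⟪U, F X⟫ * ⟪F X, U⟫ := by
    rw [h0]
    simp only [tens, LinearMap.coe_mk, AddHom.coe_mk, inner_add_left, real_inner_smul_left]
  simp only [st12_Bform]
  rw [h, real_inner_self_eq_norm_sq X, real_inner_self_eq_norm_sq U,
    real_inner_comm X U, real_inner_comm (F X) U]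
  ring


/-- Let `n ≥ 6`, let `σ` be a 3-form on `ℝⁿ`, and let `F : ℝⁿ → ℝⁿ` be a
continuous map such that `F(tX) = tF(X)`, `⟪F(X), X⟫ = 0`, `‖F(X)‖ = ‖X‖`, and
`σ_X² = −‖X‖² id + X⊗X + F(X)⊗F(X)` for all `X`. Then `F` is linear; moreover `F` is an
orthogonal, skew-symmetric endomorphism of `ℝⁿ` with `F² = −id` (a Hermitian structure). -/
theorem statement12 {n : ℕ} (hn : 6 ≤ n) (σ : AlternatingMap ℝ (Euc n) ℝ (Fin 3))
    (F : Euc n → Euc n) (hFcont : Continuous F)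
    (hFhom : ∀ (t : ℝ) (X : Euc n), F (t • X) = t • F X)
    (hFperp : ∀ X : Euc n, ⟪F X, X⟫ = 0)
    (hFnorm : ∀ X : Euc n, ‖F X‖ = ‖X‖)
    (hsq : ∀ X : Euc n, contr3 σ X ∘ₗ contr3 σ X =
      (-(‖X‖ ^ 2)) • LinearMap.id + tens X X + tens (F X) (F X)) :
    ∃ L : Euc n →ₗ[ℝ] Euc n, (∀ X : Euc n, L X = F X) ∧
      (∀ X Y : Euc n, ⟪L X, L Y⟫ = ⟪X, Y⟫) ∧
      (∀ X Y : Euc n, ⟪L X, Y⟫ = -⟪X, L Y⟫) ∧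
      L ∘ₗ L = -LinearMap.id := by
  -- Oddness of `F`
  have hFodd : ∀ X : Euc n, F (-X) = - F X := by
    intro X
    have := hFhom (-1) X
    simpa [neg_smul, one_smul] using this
  -- Additivity of `X ↦ ⟪F X, F W⟫` in the first argument
  have kk_add : ∀ X X' W : Euc n, ⟪F (X + X'), F W⟫ = ⟪F X, F W⟫ + ⟪F X', F W⟫ := by
    intro X X' W
    exact st12_key_add (fun Z => ⟪F Z, F W⟫) (st12_Bform σ (F W))
      (Continuous.inner hFcont continuous_const)
      (st12_Bform_symm σ (F W)) (st12_Bform_addl σ (F W)) (st12_Bform_smull σ (F W))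
      (fun Z => (st12_Bform_diag σ F hsq (F W) Z).symm)
      (fun Z => by show (⟪F (-Z), F W⟫ : ℝ) = -⟪F Z, F W⟫; rw [hFodd, inner_neg_left]) X X'
  -- Additivity of `F`
  have Fadd : ∀ X Y : Euc n, F (X + Y) = F X + F Y := by
    intro X Y
    have h1 : (⟪F (X+Y), F X⟫ : ℝ) = ⟪F X, F X⟫ + ⟪F Y, F X⟫ := kk_add X Y X
    have h2 : (⟪F (X+Y), F Y⟫ : ℝ) = ⟪F X, F Y⟫ + ⟪F Y, F Y⟫ := kk_add X Y Y
    have h3 : (⟪F (X+Y), F (X+Y)⟫ : ℝ) = ⟪F X, F (X+Y)⟫ + ⟪F Y, F (X+Y)⟫ := kk_add X Y (X+Y)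
    have c1 : (⟪F X, F (X+Y)⟫ : ℝ) = ⟪F (X+Y), F X⟫ := real_inner_comm _ _
    have c2 : (⟪F Y, F (X+Y)⟫ : ℝ) = ⟪F (X+Y), F Y⟫ := real_inner_comm _ _
    have c3 : (⟪F Y, F X⟫ : ℝ) = ⟪F X, F Y⟫ := real_inner_comm _ _
    have hD : (⟪F (X+Y) - F X - F Y, F (X+Y) - F X - F Y⟫ : ℝ) = 0 := by
      simp only [inner_sub_left, inner_sub_right]
      rw [h3, c1, c2, h1, h2, c3]
      ring
    have hz := inner_self_eq_zero.mp hD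
    rw [sub_sub, sub_eq_zero] at hz
    exact hz
  -- Orthogonality
  have orth : ∀ X Y : Euc n, ⟪F X, F Y⟫ = ⟪X, Y⟫ := by
    intro X Y
    have h2 : ‖F X + F Y‖ ^ 2 = ‖X + Y‖ ^ 2 := by rw [← Fadd, hFnorm]
    rw [norm_add_sq_real, norm_add_sq_real, hFnorm X, hFnorm Y] at h2
    linarith
  -- Skew-symmetry
  have skew : ∀ X Y : Euc n, ⟪F X, Y⟫ = -⟪X, F Y⟫ := by
    intro X Y
    have h := hFperp (X + Y)
    rw [Fadd] at h
    simp only [inner_add_left, inner_add_right] at h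
    rw [hFperp X, hFperp Y] at h
    have hc : (⟪X, F Y⟫ : ℝ) = ⟪F Y, X⟫ := real_inner_comm _ _
    linarith
  refine ⟨{ toFun := F, map_add' := Fadd,
            map_smul' := fun t X => by simpa using hFhom t X },
    fun X => rfl, fun X Y => orth X Y, fun X Y => skew X Y, ?_⟩
  apply LinearMap.ext
  intro X
  apply ext_inner_right ℝ
  intro Z
  simp only [LinearMap.comp_apply, LinearMap.neg_apply, LinearMap.id_apply, LinearMap.coe_mk,
    AddHom.coe_mk]
  rw [skew (F X) Z, orth X Z, inner_neg_left]
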